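/- Let m_r > m_b > 0. Then the bubble function B₂(s) extends continuously to s = 0: the limit of B₂(s) as s → 0 (s ≠ 0, |s| < (m_r − m_b)²) exists and equals 1 + ((m_r² + m_b²)/(2(m_r² − m_b²)))·ln(m_r²/m_b²). In particular the principal sheet of the bubble amplitude is free of singularities at s = 0. -/

import Mathlib

open Filter

/-- The Källén function λ(a,b,c) := a² + b² + c² − 2(ab + bc + ca). -/
noncomputable def kallen (a b c : ℝ) : ℝ := a ^ 2 + b ^ 2 + c ^ 2 - 2 * (a * b + b * c + c * a)

/-- The subtracted bubble function on the principal sheet: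
`B₂(s) = (√λ/(2s))·ln((m_r²+m_b²−s−√λ)/(m_r²+m_b²−s+√λ)) + ((m_r²−m_b²)/(2s))·ln(m_r²/m_b²)`,
with `λ = λ(s, m_r², m_b²)`. -/
noncomputable def B2 (m_r m_b s : ℝ) : ℝ :=
  Real.sqrt (kallen s (m_r ^ 2) (m_b ^ 2)) / (2 * s) *
      Real.log ((m_r ^ 2 + m_b ^ 2 - s - Real.sqrt (kallen s (m_r ^ 2) (m_b ^ 2))) /
        (m_r ^ 2 + m_b ^ 2 - s + Real.sqrt (kallen s (m_r ^ 2) (m_b ^ 2)))) +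
    (m_r ^ 2 - m_b ^ 2) / (2 * s) * Real.log (m_r ^ 2 / m_b ^ 2)

/-- For `m_r > m_b > 0`, the bubble function `B₂` extends continuously to `s = 0`:
its limit as `s → 0` (over `s ≠ 0`, `|s| < (m_r − m_b)²`) exists and equals
`1 + ((m_r² + m_b²)/(2(m_r² − m_b²)))·ln(m_r²/m_b²)`; the principal sheet of the
bubble amplitude is free of singularities at `s = 0`. -/
theorem bubble_regular_at_zero (m_r m_b : ℝ) (hb : 0 < m_b) (hrb : m_b < m_r) :
    Tendsto (fun s : ℝ => B2 m_r m_b s)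
      (nhdsWithin 0 {s : ℝ | s ≠ 0 ∧ |s| < (m_r - m_b) ^ 2})
      (nhds (1 + (m_r ^ 2 + m_b ^ 2) / (2 * (m_r ^ 2 - m_b ^ 2)) *
        Real.log (m_r ^ 2 / m_b ^ 2))) := by
  set a := m_r ^ 2 with ha_def
  set b := m_b ^ 2 with hb_def
  have hr : 0 < m_r := hb.trans hrb
  have ha : 0 < a := by positivity
  have hb' : 0 < b := by positivity
  have hba : b < a := by nlinarith
  have hd : 0 < a - b := by linarith
  have hdne : a - b ≠ 0 := hd.ne'
  -- the numerator function
  set f : ℝ → ℝ := fun s => Real.sqrt (kallen s a b) *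
      Real.log ((a + b - s - Real.sqrt (kallen s a b)) /
        (a + b - s + Real.sqrt (kallen s a b))) + (a - b) * Real.log (a / b) with hf_def
  have hlam0 : kallen 0 a b = (a - b) ^ 2 := by unfold kallen; ring
  have hlamne : kallen 0 a b ≠ 0 := by rw [hlam0]; positivity
  have hg0 : Real.sqrt (kallen 0 a b) = a - b := by rw [hlam0]; exact Real.sqrt_sq hd.le
  have hlam : HasDerivAt (fun s : ℝ => kallen s a b) (-(2 * (a + b))) 0 := by
    have h1 : HasDerivAt (fun s : ℝ => s ^ 2 + a ^ 2 + b ^ 2 - 2 * (s * a + a * b + b * s))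
        ((2:ℕ) * (0:ℝ) ^ (2-1) - 2 * (1 * a + b * 1)) 0 := by
      have hinner : HasDerivAt (fun s : ℝ => s * a + a * b + b * s) (1 * a + b * 1) 0 :=
        (((hasDerivAt_id 0).mul_const a).add_const (a*b)).add ((hasDerivAt_id 0).const_mul b)
      exact (((hasDerivAt_pow 2 0).add_const _).add_const _).sub (hinner.const_mul 2)
    have h2 : HasDerivAt (fun s : ℝ => kallen s a b)
        ((2:ℕ) * (0:ℝ) ^ (2-1) - 2 * (1 * a + b * 1)) 0 := h1
    convert h2 using 1
    norm_num

  have hg : HasDerivAt (fun s : ℝ => Real.sqrt (kallen s a b)) (-(a + b) / (a - b)) 0 := by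
    have := hlam.sqrt hlamne
    convert this using 1
    rw [hg0]; field_simp
  have hN : HasDerivAt (fun s : ℝ => a + b - s - Real.sqrt (kallen s a b))
      (0 - 1 - (-(a + b) / (a - b))) 0 :=
    ((hasDerivAt_const 0 (a + b)).sub (hasDerivAt_id 0)).sub hg
  have hD : HasDerivAt (fun s : ℝ => a + b - s + Real.sqrt (kallen s a b))
      (0 - 1 + (-(a + b) / (a - b))) 0 :=
    ((hasDerivAt_const 0 (a + b)).sub (hasDerivAt_id 0)).add hg
  have hD0 : a + b - 0 + Real.sqrt (kallen 0 a b) ≠ 0 := by rw [hg0]; simp; linarith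
  have hQ := hN.div hD hD0
  have hQ0 : (a + b - 0 - Real.sqrt (kallen 0 a b)) / (a + b - 0 + Real.sqrt (kallen 0 a b)) ≠ 0 := by
    rw [hg0]
    have h1 : a + b - 0 - (a - b) = 2 * b := by ring
    have h2 : a + b - 0 + (a - b) = 2 * a := by ring
    rw [h1, h2]
    positivity
  have hL := hQ.log hQ0
  have hf : HasDerivAt f ((a + b) / (a - b) * Real.log (a / b) + 2) 0 := by
    have h := (hg.mul hL).add_const ((a - b) * Real.log (a / b))
    rw [hf_def]
    refine h.congr_deriv ?_
    simp only [Pi.div_apply]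
    rw [hg0]
    have h1 : a + b - 0 - (a - b) = 2 * b := by ring
    have h2 : a + b - 0 + (a - b) = 2 * a := by ring
    rw [h1, h2]
    have h3 : (2 * b) / (2 * a) = b / a := by
      rw [mul_div_mul_left _ _ (two_ne_zero)]
    rw [h3, Real.log_div hb'.ne' ha.ne', Real.log_div ha.ne' hb'.ne']
    field_simp
    ring
  have hf0 : f 0 = 0 := by
    rw [hf_def]
    simp only
    rw [hg0]
    have h1 : a + b - 0 - (a - b) = 2 * b := by ring
    have h2 : a + b - 0 + (a - b) = 2 * a := by ring
    rw [h1, h2]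
    have h3 : (2 * b) / (2 * a) = b / a := by
      rw [mul_div_mul_left _ _ (two_ne_zero)]
    rw [h3, Real.log_div hb'.ne' ha.ne', Real.log_div ha.ne' hb'.ne']
    ring
  have hslope : Tendsto (fun s : ℝ => f s / s) (nhdsWithin 0 {(0:ℝ)}ᶜ)
      (nhds ((a + b) / (a - b) * Real.log (a / b) + 2)) := by
    have h := hasDerivAt_iff_tendsto_slope.mp hf
    refine h.congr fun s => ?_
    rw [slope_def_field, hf0]
    simp
  have hmain : Tendsto (fun s : ℝ => (1/2 : ℝ) * (f s / s))
      (nhdsWithin 0 {s : ℝ | s ≠ 0 ∧ |s| < (m_r - m_b) ^ 2})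
      (nhds ((1/2 : ℝ) * ((a + b) / (a - b) * Real.log (a / b) + 2))) :=
    (hslope.const_mul (1/2 : ℝ)).mono_left (nhdsWithin_mono _ fun s hs => hs.1)
  have hval : 1 + (a + b) / (2 * (a - b)) * Real.log (a / b)
      = (1/2 : ℝ) * ((a + b) / (a - b) * Real.log (a / b) + 2) := by
    field_simp
    ring
  rw [hval]
  refine Tendsto.congr' ?_ hmain
  filter_upwards [self_mem_nhdsWithin] with s hs
  obtain ⟨hs0, -⟩ := hs
  simp only [B2, ← ha_def, ← hb_def, hf_def]
  field_simp
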